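/- In the ring of formal power series in q over ℚ[x,y,t], let G = Σ_{n≥0} O_n(x,y,t) · q^n / n! (with O_0(x,y,t) = 1), where O_n(x,y,t) = Σ_{T ∈ 𝒪_n} x^{impr(T)} y^{prop(T) - deg_T(1)} t^{deg_T(1)}, and let R be the unique power series with constant term 1 satisfying R^2 = 1 - 2(x+y)q. Then G · (x + y - t + t·R) = x + y; equivalently, Σ_{n≥0} O_n(x,y,t) q^n/n! = (x+y)/(x + y - t + t√(1 - 2(x+y)q)). -/

import Mathlib

/-- A plane tree with labeled vertices: a root label together with an ordered
list of child subtrees.  (A plane tree is a rooted tree in which the children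
of each node are linearly ordered.) -/
inductive LTree : Type where
  | node : ℕ → List LTree → LTree

namespace LTree

/-- The label of the root. -/
def rootLabel : LTree → ℕ
  | node a _ => a

/-- The list of child subtrees of the root. -/
def children : LTree → List LTree
  | node _ cs => cs

/-- `deg_T(root)`: the number of children of the root. -/
def rootDeg (t : LTree) : ℕ := (children t).length

mutual
  /-- The list of all vertex labels of a tree. -/
  def labels : LTree → List ℕ
    | node a cs => a :: labelsList cs
  /-- The list of all vertex labels of a forest. -/
  def labelsList : List LTree → List ℕ
    | [] => []
    | c :: rest => labels c ++ labelsList rest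
end

/-- `β(v)`: the smallest label occurring in the subtree `t` rooted at `v`. -/
def minLabel (t : LTree) : ℕ := (labels t).foldr min (rootLabel t)

/-- `min { j, β(c₁), …, β(cₖ) }` for a vertex `j` and a list of subtrees `c₁, …, cₖ`. -/
def minOver (j : ℕ) (rest : List LTree) : ℕ := (rest.map minLabel).foldr min j

mutual
  /-- The list of edges of a tree, each recorded as a (parent label, child label)
  pair, in depth-first order. -/
  def edgeList : LTree → List (ℕ × ℕ)
    | node a cs => edgeListAux a cs
  def edgeListAux : ℕ → List LTree → List (ℕ × ℕ)
    | _, [] => []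
    | a, c :: rest => (a, rootLabel c) :: (edgeList c ++ edgeListAux a rest)
end

mutual
  /-- The list of improper edges of a tree: if a vertex `j` has children
  `j₁, …, jₖ` (ordered left to right), the edge `(j, jᵢ)` is improper when
  `β(jᵢ) < min { j, β(j_{i+1}), …, β(jₖ) }`. -/
  def improperEdges : LTree → List (ℕ × ℕ)
    | node a cs => improperEdgesAux a cs
  def improperEdgesAux : ℕ → List LTree → List (ℕ × ℕ)
    | _, [] => []
    | j, c :: rest =>
        (if minLabel c < minOver j rest then [(j, rootLabel c)] else [])
          ++ improperEdges c ++ improperEdgesAux j rest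
end

mutual
  /-- The list of proper (i.e. non-improper) edges of a tree. -/
  def properEdges : LTree → List (ℕ × ℕ)
    | node a cs => properEdgesAux a cs
  def properEdgesAux : ℕ → List LTree → List (ℕ × ℕ)
    | _, [] => []
    | j, c :: rest =>
        (if minLabel c < minOver j rest then [] else [(j, rootLabel c)])
          ++ properEdges c ++ properEdgesAux j rest
end

/-- `impr T`: the number of improper edges of `T`. -/
def impr (t : LTree) : ℕ := (improperEdges t).length

/-- `prop T`: the number of proper edges of `T`. -/
def propCount (t : LTree) : ℕ := (properEdges t).length

/-- The number of edges of `T`. -/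
def edgeCount (t : LTree) : ℕ := (edgeList t).length

/-- `T` is a labeled plane tree with `n` edges: its `n + 1` vertices are labeled
bijectively with `{1, 2, …, n + 1}`. -/
def IsLPT (n : ℕ) (t : LTree) : Prop := (labels t).Perm (List.range' 1 (n + 1))

/-- `T` is increasing: vertex labels increase along every path from the root. -/
inductive Increasing : LTree → Prop where
  | node (a : ℕ) (cs : List LTree) :
      (∀ c ∈ cs, a < rootLabel c) → (∀ c ∈ cs, Increasing c) → Increasing (node a cs)

end LTree

section
open MvPolynomial

/-- `Oₙ(x,y,t) = Σ_{T ∈ 𝒪ₙ} x^{impr T} y^{prop T - deg_T(1)} t^{deg_T(1)}`, the sum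
over all labeled plane trees with `n` edges whose root is labeled `1`, as a
polynomial in `ℚ[x,y,t]` (with `x = X 0`, `y = X 1`, `t = X 2`).  For `n = 0` the
unique such tree is a single vertex, so `O₀(x,y,t) = 1`. -/
noncomputable def Opoly (n : ℕ) : MvPolynomial (Fin 3) ℚ :=
  ∑ᶠ T ∈ {T : LTree | LTree.IsLPT n T ∧ LTree.rootLabel T = 1},
    (X 0 : MvPolynomial (Fin 3) ℚ) ^ LTree.impr T
      * (X 1) ^ (LTree.propCount T - LTree.rootDeg T) * (X 2) ^ LTree.rootDeg T

end

namespace LTree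

lemma labels_node (a : ℕ) (cs : List LTree) : labels (node a cs) = a :: labelsList cs := rfl

lemma labels_ne_nil (T : LTree) : labels T ≠ [] := by
  cases T with | node a cs => simp [labels_node]

lemma rootLabel_mem_labels (T : LTree) : rootLabel T ∈ labels T := by
  cases T with | node a cs => simp [labels_node, rootLabel]

lemma labelsList_eq_nil {cs : List LTree} (h : labelsList cs = []) : cs = [] := by
  cases cs with
  | nil => rfl
  | cons c rest =>
    exfalso
    have hc : labels c ≠ [] := labels_ne_nil c
    simp only [labelsList, List.append_eq_nil_iff] at h
    exact hc h.1

lemma eta (T : LTree) : node (rootLabel T) (children T) = T := by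
  cases T with | node a cs => rfl

lemma labelsList_cons (c : LTree) (cs : List LTree) :
    labelsList (c :: cs) = labels c ++ labelsList cs := rfl

lemma impr_node_nil (a : ℕ) : impr (node a []) = 0 := rfl
lemma prop_node_nil (a : ℕ) : propCount (node a []) = 0 := rfl

lemma impr_node_cons (a : ℕ) (c : LTree) (cs : List LTree) :
    impr (node a (c :: cs)) =
      (if minLabel c < minOver a cs then 1 else 0) + impr c + impr (node a cs) := by
  simp only [impr, improperEdges, improperEdgesAux, List.length_append]
  split <;> simp <;> omega

lemma prop_node_cons (a : ℕ) (c : LTree) (cs : List LTree) :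
    propCount (node a (c :: cs)) =
      (if minLabel c < minOver a cs then 0 else 1) + propCount c + propCount (node a cs) := by
  simp only [propCount, properEdges, properEdgesAux, List.length_append]
  split <;> simp <;> omega

lemma rootDeg_node (a : ℕ) (cs : List LTree) : rootDeg (node a cs) = cs.length := rfl

/- foldr min facts -/
lemma foldr_min_le (l : List ℕ) (x : ℕ) : l.foldr min x ≤ x := by
  induction l with
  | nil => simp
  | cons c l ih => simp only [List.foldr_cons]; omega

lemma foldr_min_le_mem (l : List ℕ) (x : ℕ) {y : ℕ} (hy : y ∈ l) : l.foldr min x ≤ y := by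
  induction l with
  | nil => simp at hy
  | cons c l ih =>
    simp only [List.foldr_cons]
    rcases List.mem_cons.mp hy with h | h
    · omega
    · have := ih h; omega

lemma foldr_min_mem (l : List ℕ) (x : ℕ) : l.foldr min x ∈ x :: l := by
  induction l with
  | nil => simp
  | cons c l ih =>
    simp only [List.foldr_cons]
    rcases le_total c (l.foldr min x) with h | h
    · simp [Nat.min_eq_left h]
    · rw [Nat.min_eq_right h]
      rcases List.mem_cons.mp ih with h' | h'
      · simp [h']
      · simp [h']

lemma foldr_min_swap (a x : ℕ) (l : List ℕ) :
    min a (l.foldr min x) = min (min a (l.foldr min a)) x := by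
  induction l with
  | nil => simp only [List.foldr_nil]; omega
  | cons c l ih => simp only [List.foldr_cons]; omega

lemma minOver_cons (a : ℕ) (c : LTree) (cs : List LTree) :
    minOver a (c :: cs) = min (minLabel c) (minOver a cs) := rfl

lemma minOver_nil (a : ℕ) : minOver a [] = a := rfl

lemma min_joint : ∀ n : ℕ,
    (∀ T : LTree, sizeOf T ≤ n → ∀ x, (labels T).foldr min x = min (minLabel T) x) ∧
    (∀ cs : List LTree, sizeOf cs ≤ n → ∀ x,
      (labelsList cs).foldr min x = (cs.map minLabel).foldr min x) := by
  intro n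
  induction n with
  | zero =>
    constructor
    · intro T hT; cases T with | node a cs => simp at hT
    · intro cs hcs x
      cases cs with
      | nil => rfl
      | cons c rest => simp at hcs
  | succ n ih =>
    constructor
    · intro T hT x
      cases T with
      | node a cs =>
        have hcs : sizeOf cs ≤ n := by simp at hT; omega
        have hJ := ih.2 cs hcs
        simp only [labels_node, List.foldr_cons, minLabel, rootLabel]
        rw [hJ x, hJ a]
        exact foldr_min_swap a x (cs.map minLabel)
    · intro cs hcs x
      cases cs with
      | nil => rfl
      | cons c rest =>
        have hc : sizeOf c ≤ n := by simp at hcs; omega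
        have hrest : sizeOf rest ≤ n := by simp at hcs; omega
        simp only [labelsList_cons, List.foldr_append, List.map_cons, List.foldr_cons]
        rw [ih.1 c hc, ih.2 rest hrest]

lemma foldr_min_labels (T : LTree) (x : ℕ) :
    (labels T).foldr min x = min (minLabel T) x :=
  (min_joint (sizeOf T)).1 T le_rfl x

lemma minLabel_node (a : ℕ) (cs : List LTree) : minLabel (node a cs) = minOver a cs := by
  have hJ := (min_joint (sizeOf cs)).2 cs le_rfl
  simp only [minLabel, labels_node, rootLabel, List.foldr_cons, minOver]
  rw [hJ a]
  have : (cs.map minLabel).foldr min a ≤ a := foldr_min_le _ _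
  omega

lemma minLabel_mem_labels (T : LTree) : minLabel T ∈ labels T := by
  have h := foldr_min_mem (labels T) (rootLabel T)
  rw [show (labels T).foldr min (rootLabel T) = minLabel T from rfl] at h
  rcases List.mem_cons.mp h with h' | h'
  · rw [h']; exact rootLabel_mem_labels T
  · exact h'

lemma minLabel_le {T : LTree} {y : ℕ} (hy : y ∈ labels T) : minLabel T ≤ y :=
  foldr_min_le_mem _ _ hy

/-- The multiset of labels. -/
def lab (T : LTree) : Multiset ℕ := (labels T : Multiset ℕ)

lemma lab_node_cons (a : ℕ) (c : LTree) (cs : List LTree) :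
    lab (node a (c :: cs)) = lab c + lab (node a cs) := by
  simp only [lab, labels_node, labelsList_cons]
  have : ((a :: (labels c ++ labelsList cs) : List ℕ) : Multiset ℕ)
      = a ::ₘ ((labels c : Multiset ℕ) + (labelsList cs : Multiset ℕ)) := by
    simp
  rw [this]
  have : ((a :: labelsList cs : List ℕ) : Multiset ℕ) = a ::ₘ (labelsList cs : Multiset ℕ) := by
    simp
  rw [this]
  calc a ::ₘ ((labels c : Multiset ℕ) + (labelsList cs : Multiset ℕ))
      = a ::ₘ ((labelsList cs : Multiset ℕ) + (labels c : Multiset ℕ)) := by rw [add_comm]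
    _ = a ::ₘ (labelsList cs : Multiset ℕ) + (labels c : Multiset ℕ) :=
        (Multiset.cons_add _ _ _).symm
    _ = (labels c : Multiset ℕ) + a ::ₘ (labelsList cs : Multiset ℕ) := add_comm _ _

/-- root is the minimum of the labels -/
def MinRoot (T : LTree) : Prop := ∀ b ∈ labels T, rootLabel T ≤ b

instance : DecidablePred MinRoot := fun T => by
  unfold MinRoot; infer_instance

/- finiteness -/
lemma finite_lists {α : Type*} {S : Set α} (hS : S.Finite) :
    ∀ m : ℕ, {l : List α | l.length ≤ m ∧ ∀ x ∈ l, x ∈ S}.Finite := by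
  intro m
  induction m with
  | zero =>
    apply Set.Finite.subset (Set.finite_singleton ([] : List α))
    rintro l ⟨h1, -⟩
    simp only [Set.mem_singleton_iff]
    exact List.eq_nil_of_length_eq_zero (Nat.le_zero.mp h1)
  | succ m ih =>
    apply Set.Finite.subset (Set.Finite.insert [] (Set.Finite.image2 List.cons hS ih))
    rintro l ⟨h1, h2⟩
    cases l with
    | nil => simp
    | cons x l' =>
      right
      refine ⟨x, h2 x (by simp), l', ⟨?_, fun y hy => h2 y (by simp [hy])⟩, rfl⟩
      simp at h1; omega

lemma labels_sub_of_mem {c : LTree} {cs : List LTree} (hc : c ∈ cs) :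
    (labels c).length ≤ (labelsList cs).length ∧ ∀ x ∈ labels c, x ∈ labelsList cs := by
  induction cs with
  | nil => simp at hc
  | cons d rest ih =>
    rcases List.mem_cons.mp hc with h | h
    · subst h
      constructor
      · simp [labelsList_cons]
      · intro x hx; simp [labelsList_cons, hx]
    · have := ih h
      constructor
      · simp only [labelsList_cons, List.length_append]; omega
      · intro x hx; simp [labelsList_cons, this.2 x hx]

lemma length_le_labelsList (cs : List LTree) : cs.length ≤ (labelsList cs).length := by
  induction cs with
  | nil => simp [labelsList]
  | cons c rest ih =>
    simp only [labelsList_cons, List.length_append, List.length_cons]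
    have : 1 ≤ (labels c).length := by
      cases h : labels c with
      | nil => exact absurd h (labels_ne_nil c)
      | cons x l => simp
    omega

lemma finite_trees (m N : ℕ) :
    {T : LTree | (labels T).length ≤ m ∧ ∀ x ∈ labels T, x ≤ N}.Finite := by
  induction m with
  | zero =>
    apply Set.Finite.subset Set.finite_empty
    rintro T ⟨h1, -⟩
    have := labels_ne_nil T
    cases h : labels T with
    | nil => exact absurd h this
    | cons x l => rw [h] at h1; simp at h1
  | succ m ih =>
    apply Set.Finite.subset
      (Set.Finite.image2 node (Set.finite_Iic N)
        (finite_lists ih m))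
    rintro T ⟨h1, h2⟩
    cases T with
    | node a cs =>
      refine ⟨a, h2 a (by simp [labels_node]), cs, ⟨?_, fun c hc => ⟨?_, ?_⟩⟩, rfl⟩
      · have := length_le_labelsList cs
        simp only [labels_node, List.length_cons] at h1
        omega
      · have := (labels_sub_of_mem hc).1
        simp only [labels_node, List.length_cons] at h1
        omega
      · intro x hx
        refine h2 x ?_
        simp only [labels_node, List.mem_cons]
        exact Or.inr ((labels_sub_of_mem hc).2 x hx)

lemma finite_lab (L : Finset ℕ) : {T : LTree | lab T = L.val}.Finite := by
  apply Set.Finite.subset (finite_trees L.card (L.sup id))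
  rintro T hT
  simp only [Set.mem_setOf_eq] at hT ⊢
  constructor
  · have : (labels T).length = Multiset.card (lab T) := by simp [lab]
    rw [this, hT]; simp
  · intro x hx
    have : x ∈ L.val := by rw [← hT]; exact hx
    exact Finset.le_sup (f := id) this

/-- the finset of trees with label multiset `L.val` -/
noncomputable def Fs (L : Finset ℕ) : Finset LTree := (finite_lab L).toFinset

lemma mem_Fs {L : Finset ℕ} {T : LTree} : T ∈ Fs L ↔ lab T = L.val := by
  simp [Fs, Set.Finite.mem_toFinset]

/-- trees whose root carries the minimum label -/
noncomputable def OsF (L : Finset ℕ) : Finset LTree := (Fs L).filter MinRoot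

lemma mem_OsF {L : Finset ℕ} {T : LTree} : T ∈ OsF L ↔ lab T = L.val ∧ MinRoot T := by
  simp [OsF, Finset.mem_filter, mem_Fs]

lemma mem_labels_iff {L : Finset ℕ} {T : LTree} (h : lab T = L.val) (y : ℕ) :
    y ∈ labels T ↔ y ∈ L := by
  rw [Finset.mem_def, ← h]; simp [lab]

lemma minLabel_eq_min' {L : Finset ℕ} {T : LTree} (h : lab T = L.val) (hL : L.Nonempty) :
    minLabel T = L.min' hL := by
  apply le_antisymm
  · exact Finset.le_min' _ _ _ (fun y hy => minLabel_le ((mem_labels_iff h _).mpr hy))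
  · exact Finset.min'_le _ _ ((mem_labels_iff h _).mp (minLabel_mem_labels T))

lemma rootLabel_eq_min {L : Finset ℕ} {T : LTree} (h : lab T = L.val) {m : ℕ}
    (hm : m ∈ L) (hmin : ∀ b ∈ L, m ≤ b) (hroot : MinRoot T) : rootLabel T = m := by
  apply le_antisymm
  · exact hroot m ((mem_labels_iff h _).mpr hm)
  · exact hmin _ ((mem_labels_iff h _).mp (rootLabel_mem_labels T))

lemma min_split {L M : Finset ℕ} {m : ℕ} (hm : m ∈ L) (hmin : ∀ b ∈ L, m ≤ b)
    (hsub : M ⊆ L) (hMne : M.Nonempty) (hNne : (L \ M).Nonempty) :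
    (M.min' hMne < (L \ M).min' hNne ↔ m ∈ M) := by
  constructor
  · intro hlt
    by_contra hmM
    have hmN : m ∈ L \ M := Finset.mem_sdiff.mpr ⟨hm, hmM⟩
    have h1 : (L \ M).min' hNne ≤ m := Finset.min'_le _ _ hmN
    have h2 : m ≤ M.min' hMne := hmin _ (hsub (Finset.min'_mem _ _))
    omega
  · intro hmM
    have h1 : M.min' hMne ≤ m := Finset.min'_le _ _ hmM
    have h2 : m ≤ (L \ M).min' hNne := hmin _ ((Finset.mem_sdiff.mp (Finset.min'_mem _ hNne)).1)
    have h3 : (L \ M).min' hNne ≠ m := by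
      intro he
      have := (Finset.mem_sdiff.mp (Finset.min'_mem _ hNne)).2
      rw [he] at this; exact this hmM
    omega

lemma minroot_deg_le_prop {T : LTree} (h : MinRoot T) : rootDeg T ≤ propCount T := by
  cases T with
  | node a cs =>
    rw [rootDeg_node]
    have key : ∀ cs' : List LTree,
        (∀ c ∈ cs', ∀ x ∈ labels c, a ≤ x) → cs'.length ≤ propCount (node a cs') := by
      intro cs'
      induction cs' with
      | nil => intro _; simp [prop_node_nil]
      | cons c rest ih =>
        intro hall
        rw [prop_node_cons]
        have hc : ¬ (minLabel c < minOver a rest) := by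
          have h1 : a ≤ minLabel c := hall c (by simp) _ (minLabel_mem_labels c)
          have h2 : minOver a rest ≤ a := by
            rw [← minLabel_node]
            exact minLabel_le (rootLabel_mem_labels (node a rest))
          omega
        rw [if_neg hc]
        have := ih (fun c hc => hall c (by simp [hc]))
        simp only [List.length_cons]
        omega
    apply key
    intro c hc x hx
    exact h x (by
      simp only [labels_node, List.mem_cons]; right
      exact (labels_sub_of_mem hc).2 x hx)

lemma minroot_sub {a : ℕ} {c : LTree} {cs : List LTree} (h : MinRoot (node a (c :: cs))) :
    MinRoot (node a cs) := by
  intro b hb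
  simp only [labels_node, List.mem_cons] at hb
  refine h b ?_
  simp only [labels_node, labelsList_cons, rootLabel, List.mem_cons, List.mem_append] at *
  tauto
/- the double-factorial-style sequence, defined by its own convolution recurrence -/
noncomputable def ff : ℕ → ℚ
  | 0 => 0
  | 1 => 1
  | (n+2) => ∑ j ∈ (Finset.Icc 1 (n+1)).attach,
      (((n+1).choose (j.1 - 1) : ℕ) : ℚ) * ff j.1 * ff (n+2-j.1)
  termination_by n => n
  decreasing_by
  · have := j.2; simp only [Finset.mem_Icc] at this; omega
  · have := j.2; simp only [Finset.mem_Icc] at this; omega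

lemma ff_one : ff 1 = 1 := by simp [ff]

lemma ff_def {k : ℕ} (h2 : 2 ≤ k) :
    ff k = ∑ j ∈ Finset.Icc 1 (k-1), (((k-1).choose (j-1) : ℕ) : ℚ) * ff j * ff (k-j) := by
  obtain ⟨n, rfl⟩ : ∃ n, k = n + 2 := ⟨k - 2, by omega⟩
  rw [show ff (n+2) = ∑ j ∈ (Finset.Icc 1 (n+1)).attach,
      (((n+1).choose (j.1 - 1) : ℕ) : ℚ) * ff j.1 * ff (n+2-j.1) from by rw [ff]]
  rw [Finset.sum_attach (Finset.Icc 1 (n+1))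
    (fun j => (((n+1).choose (j - 1) : ℕ) : ℚ) * ff j * ff (n+2-j))]
  norm_num

lemma ff_symm {k : ℕ} (h2 : 2 ≤ k) :
    ∑ j ∈ Finset.Icc 1 (k-1), (((k-1).choose j : ℕ) : ℚ) * ff j * ff (k-j) = ff k := by
  rw [ff_def h2]
  apply Finset.sum_nbij' (fun j => k - j) (fun j => k - j)
  · intro a ha; simp only [Finset.mem_Icc] at *; omega
  · intro a ha; simp only [Finset.mem_Icc] at *; omega
  · intro a ha; simp only [Finset.mem_Icc] at ha; omega
  · intro a ha; simp only [Finset.mem_Icc] at ha; omega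
  · intro a ha
    simp only [Finset.mem_Icc] at ha
    rw [show k - (k - a) = a by omega, show k - a - 1 = (k-1) - a by omega,
      Nat.choose_symm (by omega : a ≤ k - 1)]
    ring

lemma ff_two {k : ℕ} (h2 : 2 ≤ k) :
    ∑ j ∈ Finset.Icc 1 (k-1), ((k.choose j : ℕ) : ℚ) * ff j * ff (k-j) = 2 * ff k := by
  have hsplit : ∀ j ∈ Finset.Icc 1 (k-1),
      ((k.choose j : ℕ) : ℚ) * ff j * ff (k-j)
        = (((k-1).choose (j-1) : ℕ) : ℚ) * ff j * ff (k-j)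
          + (((k-1).choose j : ℕ) : ℚ) * ff j * ff (k-j) := by
    intro j hj
    simp only [Finset.mem_Icc] at hj
    have : k.choose j = (k-1).choose (j-1) + (k-1).choose j := by
      obtain ⟨n, rfl⟩ : ∃ n, k = n + 1 := ⟨k - 1, by omega⟩
      obtain ⟨i, rfl⟩ : ∃ i, j = i + 1 := ⟨j - 1, by omega⟩
      simp [Nat.choose_succ_succ]
    rw [this]; push_cast; ring
  rw [Finset.sum_congr rfl hsplit, Finset.sum_add_distrib, ff_symm h2, ← ff_def h2]
  ring

/- weights -/
noncomputable def w (T : LTree) : MvPolynomial (Fin 3) ℚ :=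
  (MvPolynomial.X 0) ^ impr T * (MvPolynomial.X 1) ^ propCount T

noncomputable def wt (T : LTree) : MvPolynomial (Fin 3) ℚ :=
  (MvPolynomial.X 0) ^ impr T * (MvPolynomial.X 1) ^ (propCount T - rootDeg T)
    * (MvPolynomial.X 2) ^ rootDeg T

noncomputable def Fp (L : Finset ℕ) : MvPolynomial (Fin 3) ℚ := ∑ T ∈ Fs L, w T
noncomputable def Osp (L : Finset ℕ) : MvPolynomial (Fin 3) ℚ := ∑ T ∈ OsF L, wt T

noncomputable def Sd : MvPolynomial (Fin 3) ℚ := MvPolynomial.X 0 + MvPolynomial.X 1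

/- singletons -/
lemma lab_singleton {T : LTree} {a : ℕ} : lab T = ({a} : Finset ℕ).val ↔ T = node a [] := by
  constructor
  · intro h
    cases T with
    | node b cs =>
      have hv : ({a} : Finset ℕ).val = (a ::ₘ 0 : Multiset ℕ) := rfl
      rw [hv] at h
      have hcard : Multiset.card (lab (node b cs)) = 1 := by rw [h]; simp
      simp only [lab, labels_node, Multiset.coe_card, List.length_cons] at hcard
      have hnil : labelsList cs = [] := List.eq_nil_of_length_eq_zero (by omega)
      have hcs : cs = [] := labelsList_eq_nil hnil
      subst hcs
      have : lab (node b []) = (b ::ₘ 0 : Multiset ℕ) := rfl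
      rw [this] at h
      have : b = a := by
        rcases Multiset.cons_eq_cons.mp h with ⟨h1, -⟩ | ⟨-, cs', h1', -⟩
        · exact h1
        · exact absurd h1'.symm (Multiset.cons_ne_zero)
      rw [this]
  · rintro rfl; rfl

lemma Fs_singleton (a : ℕ) : Fs {a} = {node a []} := by
  ext T; rw [mem_Fs, Finset.mem_singleton]; exact lab_singleton

lemma minroot_leaf (a : ℕ) : MinRoot (node a []) := by
  intro b hb
  simp only [labels_node, labelsList, List.mem_singleton] at hb
  simp [hb, rootLabel]

lemma OsF_singleton (a : ℕ) : OsF {a} = {node a []} := by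
  ext T
  simp only [mem_OsF, Finset.mem_singleton, ← lab_singleton]
  exact ⟨fun h => h.1, fun h => ⟨h, by rw [lab_singleton.mp h]; exact minroot_leaf a⟩⟩

lemma w_leaf (a : ℕ) : w (node a []) = 1 := by
  simp [w, impr_node_nil, prop_node_nil]

lemma wt_leaf (a : ℕ) : wt (node a []) = 1 := by
  simp [wt, impr_node_nil, prop_node_nil, rootDeg_node]

lemma Fp_singleton (a : ℕ) : Fp {a} = 1 := by
  rw [Fp, Fs_singleton, Finset.sum_singleton, w_leaf]

lemma Osp_singleton (a : ℕ) : Osp {a} = 1 := by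
  rw [Osp, OsF_singleton, Finset.sum_singleton, wt_leaf]

lemma card_lab {L : Finset ℕ} {T : LTree} (h : lab T = L.val) :
    (labels T).length = L.card := by
  have : Multiset.card (lab T) = L.card := by rw [h]; rfl
  simpa [lab] using this

lemma exists_cons {L : Finset ℕ} {T : LTree} (hT : T ∈ Fs L) (h2 : 2 ≤ L.card) :
    ∃ a c cs, T = node a (c :: cs) := by
  cases T with
  | node a cs =>
    cases cs with
    | nil =>
      exfalso
      have := card_lab (mem_Fs.mp hT)
      simp only [labels_node, labelsList, List.length_cons, List.length_nil] at this
      omega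
    | cons c rest => exact ⟨a, c, rest, rfl⟩

/- the decomposition facts -/
lemma decomp_main {L : Finset ℕ} {a : ℕ} {c : LTree} {cs : List LTree}
    (h : lab (node a (c :: cs)) = L.val) :
    (labels c).toFinset.val = lab c ∧ (labels c).toFinset ⊆ L ∧
      (labels c).toFinset ≠ ∅ ∧ (labels c).toFinset ≠ L ∧
      lab (node a cs) = (L \ (labels c).toFinset).val ∧ a ∉ (labels c).toFinset := by
  have hadd : lab c + lab (node a cs) = L.val := by rw [← lab_node_cons]; exact h
  have hnod : (lab c + lab (node a cs)).Nodup := by rw [hadd]; exact L.nodup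
  obtain ⟨n1, n2, disj⟩ := Multiset.nodup_add.mp hnod
  have Mval : (labels c).toFinset.val = lab c := by
    have : (labels c).toFinset.val = ((labels c).dedup : Multiset ℕ) := rfl
    rw [this, List.dedup_eq_self.mpr (Multiset.coe_nodup.mp n1)]
    rfl
  have hsub : (labels c).toFinset ⊆ L := by
    rw [← Finset.val_le_iff, Mval, ← hadd]
    exact Multiset.le_add_right _ _
  have hne : (labels c).toFinset ≠ ∅ := by
    intro he
    have : (labels c).toFinset.val = 0 := by rw [he]; rfl
    rw [Mval] at this
    exact labels_ne_nil c ((Multiset.coe_eq_zero _).mp this)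
  have hneL : (labels c).toFinset ≠ L := by
    intro he
    have h0 : lab c + lab (node a cs) = lab c + 0 := by
      rw [add_zero, hadd, ← he, Mval]
    have : lab (node a cs) = 0 := by
      exact add_left_cancel h0
    have := (Multiset.coe_eq_zero _).mp this
    exact labels_ne_nil _ this
  have hrest : lab (node a cs) = (L \ (labels c).toFinset).val := by
    rw [Finset.sdiff_val, Mval, ← hadd, add_tsub_cancel_left]
  have haM : a ∉ (labels c).toFinset := by
    intro ha
    have ha' : a ∈ lab c := by rw [← Mval]; exact ha
    have ha2 : a ∈ lab (node a cs) := by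
      simp [lab, labels_node]
    exact (Multiset.disjoint_left.mp disj ha') ha2
  exact ⟨Mval, hsub, hne, hneL, hrest, haM⟩

lemma comp_mem {L M : Finset ℕ} {c T' : LTree} (hM : M ⊆ L) (hc : lab c = M.val)
    (hT' : lab T' = (L \ M).val) :
    lab (node (rootLabel T') (c :: children T')) = L.val := by
  rw [lab_node_cons, eta, hc, hT', Finset.sdiff_val,
    add_tsub_cancel_of_le (Finset.val_le_iff.mpr hM)]

/- weight splitting -/
lemma w_split {L : Finset ℕ} {m : ℕ} (hm : m ∈ L) (hmin : ∀ b ∈ L, m ≤ b)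
    {a : ℕ} {c : LTree} {cs : List LTree} (h : lab (node a (c :: cs)) = L.val) :
    w (node a (c :: cs)) =
      (if m ∈ (labels c).toFinset then (MvPolynomial.X 0 : MvPolynomial (Fin 3) ℚ)
        else MvPolynomial.X 1) * w c * w (node a cs) := by
  obtain ⟨Mval, hsub, hne, hneL, hrest, -⟩ := decomp_main h
  set M := (labels c).toFinset with hM
  have hMne : M.Nonempty := Finset.nonempty_iff_ne_empty.mpr hne
  have hNne : (L \ M).Nonempty := by
    rw [← Finset.card_pos, Finset.card_sdiff_of_subset hsub]
    have h1 : M.card < L.card := Finset.card_lt_card (Finset.ssubset_iff_subset_ne.mpr ⟨hsub, hneL⟩)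
    omega
  have hminc : minLabel c = M.min' hMne := minLabel_eq_min' (by rw [Mval]) hMne
  have hminT' : minOver a cs = (L \ M).min' hNne := by
    rw [← minLabel_node]
    exact minLabel_eq_min' hrest hNne
  have hcond : (minLabel c < minOver a cs) ↔ m ∈ M := by
    rw [hminc, hminT']
    exact min_split hm hmin hsub hMne hNne
  rw [w, impr_node_cons, prop_node_cons]
  by_cases hmem : m ∈ M
  · rw [if_pos (hcond.mpr hmem), if_pos (hcond.mpr hmem), if_pos hmem]
    rw [w, w]; ring
  · rw [if_neg (fun hx => hmem (hcond.mp hx)), if_neg (fun hx => hmem (hcond.mp hx)),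
      if_neg hmem]
    rw [w, w]; ring

lemma wt_split {a : ℕ} {c : LTree} {cs : List LTree}
    (hroot : MinRoot (node a (c :: cs))) :
    wt (node a (c :: cs)) = (MvPolynomial.X 2 : MvPolynomial (Fin 3) ℚ) * w c
      * wt (node a cs) := by
  have hcond : ¬ (minLabel c < minOver a cs) := by
    have h1 : a ≤ minLabel c := by
      refine hroot _ ?_
      have := minLabel_mem_labels c
      simp only [labels_node, labelsList_cons, List.mem_cons, List.mem_append]
      tauto
    have h2 : minOver a cs ≤ a := by
      rw [← minLabel_node]
      exact minLabel_le (rootLabel_mem_labels (node a cs))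
    omega
  have hdeg : rootDeg (node a cs) ≤ propCount (node a cs) :=
    minroot_deg_le_prop (minroot_sub hroot)
  rw [wt, impr_node_cons, prop_node_cons, if_neg hcond, if_neg hcond]
  rw [wt, w]
  rw [show rootDeg (node a (c :: cs)) = rootDeg (node a cs) + 1 by
    simp [rootDeg_node]]
  rw [show 1 + propCount c + propCount (node a cs) - (rootDeg (node a cs) + 1)
      = propCount c + (propCount (node a cs) - rootDeg (node a cs)) by omega]
  rw [pow_add, pow_add, pow_add]
  ring
/- head/tail decomposition maps -/
def hd : LTree → LTree
  | node _ [] => node 0 []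
  | node _ (c :: _) => c

def tl : LTree → LTree
  | node a [] => node a []
  | node a (_ :: cs) => node a cs

lemma toFinset_eq_of_val {M : Finset ℕ} {c : LTree} (hc : lab c = M.val) :
    (labels c).toFinset = M := by
  apply Finset.val_injective
  have hnd : (labels c).Nodup := by
    have : (lab c).Nodup := by rw [hc]; exact M.nodup
    exact Multiset.coe_nodup.mp this
  have : (labels c).toFinset.val = ((labels c).dedup : Multiset ℕ) := rfl
  rw [this, List.dedup_eq_self.mpr hnd, ← hc]; rfl

lemma Fp_rec (L : Finset ℕ) {m : ℕ} (hm : m ∈ L) (hmin : ∀ b ∈ L, m ≤ b) (h2 : 2 ≤ L.card) :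
    Fp L = ∑ M ∈ L.powerset, (if M = ∅ ∨ M = L then 0 else
      (if m ∈ M then (MvPolynomial.X 0 : MvPolynomial (Fin 3) ℚ) else MvPolynomial.X 1)
        * Fp M * Fp (L \ M)) := by
  classical
  have step1 : ∑ M ∈ L.powerset, (if M = ∅ ∨ M = L then 0 else
        (if m ∈ M then (MvPolynomial.X 0 : MvPolynomial (Fin 3) ℚ) else MvPolynomial.X 1)
          * Fp M * Fp (L \ M))
      = ∑ M ∈ L.powerset.filter (fun M => ¬(M = ∅ ∨ M = L)),
        (if m ∈ M then (MvPolynomial.X 0 : MvPolynomial (Fin 3) ℚ) else MvPolynomial.X 1)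
          * Fp M * Fp (L \ M) := by
    rw [Finset.sum_filter]
    apply Finset.sum_congr rfl
    intro M hM
    by_cases hc : M = ∅ ∨ M = L <;> simp [hc]
  rw [step1]
  have step3 : ∀ M : Finset ℕ,
      (if m ∈ M then (MvPolynomial.X 0 : MvPolynomial (Fin 3) ℚ) else MvPolynomial.X 1)
          * Fp M * Fp (L \ M)
        = ∑ p ∈ Fs M ×ˢ Fs (L \ M),
            (if m ∈ M then (MvPolynomial.X 0 : MvPolynomial (Fin 3) ℚ) else MvPolynomial.X 1)
              * w p.1 * w p.2 := by
    intro M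
    rw [Finset.sum_product, Fp, Fp, mul_assoc, Finset.sum_mul_sum, Finset.mul_sum]
    apply Finset.sum_congr rfl
    intro c _
    rw [Finset.mul_sum]
    apply Finset.sum_congr rfl
    intro T' _
    ring
  simp_rw [step3]
  rw [← Finset.sum_sigma (L.powerset.filter (fun M => ¬(M = ∅ ∨ M = L)))
      (fun M => Fs M ×ˢ Fs (L \ M))
      (fun p => (if m ∈ p.1 then (MvPolynomial.X 0 : MvPolynomial (Fin 3) ℚ)
        else MvPolynomial.X 1) * w p.2.1 * w p.2.2)]
  rw [Fp]
  apply Finset.sum_nbij' (fun T => (⟨(labels (hd T)).toFinset, (hd T, tl T)⟩ :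
      (M : Finset ℕ) × LTree × LTree))
    (fun p => node (rootLabel p.2.2) (p.2.1 :: children p.2.2))
  · -- forward membership
    intro T hT
    obtain ⟨a, c, cs, rfl⟩ := exists_cons hT h2
    obtain ⟨Mval, hsub, hne, hneL, hrest, -⟩ := decomp_main (mem_Fs.mp hT)
    have hhd : hd (node a (c :: cs)) = c := rfl
    have htl : tl (node a (c :: cs)) = node a cs := rfl
    rw [Finset.mem_sigma]
    constructor
    · rw [Finset.mem_filter, Finset.mem_powerset]
      rw [hhd]
      refine ⟨hsub, ?_⟩
      push_neg
      exact ⟨Finset.nonempty_iff_ne_empty.mpr hne, hneL⟩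
    · rw [Finset.mem_product, hhd, htl]
      exact ⟨mem_Fs.mpr Mval.symm, mem_Fs.mpr hrest⟩
  · -- backward membership
    rintro ⟨M, c, T'⟩ hp
    rw [Finset.mem_sigma, Finset.mem_filter, Finset.mem_powerset, Finset.mem_product] at hp
    obtain ⟨⟨hsub, -⟩, hc, hT'⟩ := hp
    rw [mem_Fs] at hc hT' ⊢
    exact comp_mem hsub hc hT'
  · -- left inverse
    intro T hT
    obtain ⟨a, c, cs, rfl⟩ := exists_cons hT h2
    simp [hd, tl, rootLabel, children]
  · -- right inverse
    rintro ⟨M, c, T'⟩ hp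
    rw [Finset.mem_sigma, Finset.mem_filter, Finset.mem_powerset, Finset.mem_product] at hp
    obtain ⟨⟨hsub, -⟩, hc, hT'⟩ := hp
    rw [mem_Fs] at hc
    have h1 : hd (node (rootLabel T') (c :: children T')) = c := rfl
    have h2' : tl (node (rootLabel T') (c :: children T')) = T' := by
      show node (rootLabel T') (children T') = T'
      exact eta T'
    simp only [h1, h2', toFinset_eq_of_val hc]
  · -- weights agree
    intro T hT
    obtain ⟨a, c, cs, rfl⟩ := exists_cons hT h2
    have hhd : hd (node a (c :: cs)) = c := rfl
    have htl : tl (node a (c :: cs)) = node a cs := rfl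
    rw [hhd, htl]
    exact w_split hm hmin (mem_Fs.mp hT)

lemma Osp_rec (L : Finset ℕ) {m : ℕ} (hm : m ∈ L) (hmin : ∀ b ∈ L, m ≤ b) (h2 : 2 ≤ L.card) :
    Osp L = ∑ M ∈ (L.erase m).powerset, (if M = ∅ then 0 else
      (MvPolynomial.X 2 : MvPolynomial (Fin 3) ℚ) * Fp M * Osp (L \ M)) := by
  classical
  have step1 : ∑ M ∈ (L.erase m).powerset, (if M = ∅ then 0 else
        (MvPolynomial.X 2 : MvPolynomial (Fin 3) ℚ) * Fp M * Osp (L \ M))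
      = ∑ M ∈ (L.erase m).powerset.filter (fun M => ¬ M = ∅),
        (MvPolynomial.X 2 : MvPolynomial (Fin 3) ℚ) * Fp M * Osp (L \ M) := by
    rw [Finset.sum_filter]
    apply Finset.sum_congr rfl
    intro M hM
    by_cases hc : M = ∅ <;> simp [hc]
  rw [step1]
  have step3 : ∀ M : Finset ℕ,
      (MvPolynomial.X 2 : MvPolynomial (Fin 3) ℚ) * Fp M * Osp (L \ M)
        = ∑ p ∈ Fs M ×ˢ OsF (L \ M),
            (MvPolynomial.X 2 : MvPolynomial (Fin 3) ℚ) * w p.1 * wt p.2 := by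
    intro M
    rw [Finset.sum_product, Fp, Osp, mul_assoc, Finset.sum_mul_sum, Finset.mul_sum]
    apply Finset.sum_congr rfl
    intro c _
    rw [Finset.mul_sum]
    apply Finset.sum_congr rfl
    intro T' _
    ring
  simp_rw [step3]
  rw [← Finset.sum_sigma ((L.erase m).powerset.filter (fun M => ¬ M = ∅))
      (fun M => Fs M ×ˢ OsF (L \ M))
      (fun p => (MvPolynomial.X 2 : MvPolynomial (Fin 3) ℚ) * w p.2.1 * wt p.2.2)]
  rw [Osp]
  apply Finset.sum_nbij' (fun T => (⟨(labels (hd T)).toFinset, (hd T, tl T)⟩ :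
      (M : Finset ℕ) × LTree × LTree))
    (fun p => node (rootLabel p.2.2) (p.2.1 :: children p.2.2))
  · -- forward membership
    intro T hT
    obtain ⟨hlab, hroot⟩ := mem_OsF.mp hT
    obtain ⟨a, c, cs, rfl⟩ := exists_cons (mem_Fs.mpr hlab) h2
    obtain ⟨Mval, hsub, hne, hneL, hrest, haM⟩ := decomp_main hlab
    have ha : a = m := by
      have := rootLabel_eq_min hlab hm hmin hroot
      simpa [rootLabel] using this
    have hhd : hd (node a (c :: cs)) = c := rfl
    have htl : tl (node a (c :: cs)) = node a cs := rfl
    rw [Finset.mem_sigma]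
    constructor
    · rw [Finset.mem_filter, Finset.mem_powerset, hhd]
      exact ⟨Finset.subset_erase.mpr ⟨hsub, ha ▸ haM⟩, hne⟩
    · rw [Finset.mem_product, hhd, htl]
      exact ⟨mem_Fs.mpr Mval.symm, mem_OsF.mpr ⟨hrest, minroot_sub hroot⟩⟩
  · -- backward membership
    rintro ⟨M, c, T'⟩ hp
    rw [Finset.mem_sigma, Finset.mem_filter, Finset.mem_powerset, Finset.mem_product] at hp
    obtain ⟨⟨hsub, -⟩, hc, hT'⟩ := hp
    rw [mem_Fs] at hc
    rw [mem_OsF] at hT'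
    obtain ⟨hlabT', hrootT'⟩ := hT'
    obtain ⟨hsubL, hmM⟩ := Finset.subset_erase.mp hsub
    have hlabj : lab (node (rootLabel T') (c :: children T')) = L.val :=
      comp_mem hsubL hc hlabT'
    have hroot' : rootLabel T' = m := by
      apply rootLabel_eq_min hlabT' (Finset.mem_sdiff.mpr ⟨hm, hmM⟩)
        (fun b hb => hmin b (Finset.mem_sdiff.mp hb).1) hrootT'
    rw [mem_OsF]
    refine ⟨hlabj, ?_⟩
    intro b hb
    have hbL : b ∈ L := (mem_labels_iff hlabj b).mp hb
    show rootLabel (node (rootLabel T') (c :: children T')) ≤ b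
    rw [show rootLabel (node (rootLabel T') (c :: children T')) = rootLabel T' from rfl,
      hroot']
    exact hmin b hbL
  · -- left inverse
    intro T hT
    obtain ⟨hlab, -⟩ := mem_OsF.mp hT
    obtain ⟨a, c, cs, rfl⟩ := exists_cons (mem_Fs.mpr hlab) h2
    simp [hd, tl, rootLabel, children]
  · -- right inverse
    rintro ⟨M, c, T'⟩ hp
    rw [Finset.mem_sigma, Finset.mem_filter, Finset.mem_powerset, Finset.mem_product] at hp
    obtain ⟨⟨hsub, -⟩, hc, hT'⟩ := hp
    rw [mem_Fs] at hc
    have h1 : hd (node (rootLabel T') (c :: children T')) = c := rfl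
    have h2' : tl (node (rootLabel T') (c :: children T')) = T' := by
      show node (rootLabel T') (children T') = T'
      exact eta T'
    simp only [h1, h2', toFinset_eq_of_val hc]
  · -- weights agree
    intro T hT
    obtain ⟨hlab, hroot⟩ := mem_OsF.mp hT
    obtain ⟨a, c, cs, rfl⟩ := exists_cons (mem_Fs.mpr hlab) h2
    have hhd : hd (node a (c :: cs)) = c := rfl
    have htl : tl (node a (c :: cs)) = node a cs := rfl
    rw [hhd, htl]
    exact wt_split hroot
lemma sum_powerset_fun_card {α β : Type*} [AddCommMonoid β] (s : Finset α) (g : ℕ → β) :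
    ∑ M ∈ s.powerset, g M.card = ∑ j ∈ Finset.range (s.card + 1), s.card.choose j • g j := by
  rw [Finset.sum_powerset]
  apply Finset.sum_congr rfl
  intro j _
  exact Finset.sum_powersetCard j s g

lemma smul_C_mul (c : ℕ) (A : MvPolynomial (Fin 3) ℚ) (q : ℚ) :
    c • (A * MvPolynomial.C q) = A * MvPolynomial.C ((c : ℚ) * q) := by
  rw [nsmul_eq_mul, map_mul, map_natCast]
  ring

lemma Fp_eq : ∀ n : ℕ, 1 ≤ n → ∀ L : Finset ℕ, L.card = n →
    Fp L = MvPolynomial.C (ff n) * Sd ^ (n - 1) := by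
  intro n
  induction n using Nat.strong_induction_on with
  | _ n ih =>
    intro hn L hcard
    rcases eq_or_lt_of_le hn with h1 | h2
    · obtain ⟨a, rfl⟩ := Finset.card_eq_one.mp (by omega : L.card = 1)
      rw [Fp_singleton, ← h1]
      simp [ff_one]
    · have h2' : 2 ≤ L.card := by omega
      have hLne : L.Nonempty := Finset.card_pos.mp (by omega)
      set m := L.min' hLne with hmdef
      have hm : m ∈ L := Finset.min'_mem _ _
      have hmin : ∀ b ∈ L, m ≤ b := fun b hb => Finset.min'_le _ _ hb
      rw [Fp_rec L hm hmin h2']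
      set L₀ := L.erase m with hL₀
      have hmL₀ : m ∉ L₀ := Finset.notMem_erase _ _
      have hins : insert m L₀ = L := Finset.insert_erase hm
      have hcard₀ : L₀.card = n - 1 := by rw [hL₀, Finset.card_erase_of_mem hm, hcard]
      have hcardins : (insert m L₀).card = n := by rw [hins, hcard]
      rw [← hins, Finset.sum_powerset_insert hmL₀]
      -- first sum
      have hsum1 : ∑ M ∈ L₀.powerset,
          (if M = ∅ ∨ M = insert m L₀ then 0 else
            (if m ∈ M then (MvPolynomial.X 0 : MvPolynomial (Fin 3) ℚ) else MvPolynomial.X 1)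
              * Fp M * Fp (insert m L₀ \ M))
          = MvPolynomial.X 1 * Sd ^ (n-2) * MvPolynomial.C (ff n) := by
        have hcongr : ∀ M ∈ L₀.powerset,
            (if M = ∅ ∨ M = insert m L₀ then 0 else
              (if m ∈ M then (MvPolynomial.X 0 : MvPolynomial (Fin 3) ℚ) else MvPolynomial.X 1)
                * Fp M * Fp (insert m L₀ \ M))
            = (if M.card = 0 then 0 else
                MvPolynomial.X 1 * Sd ^ (n-2)
                  * MvPolynomial.C (ff M.card * ff (n - M.card))) := by
          intro M hM
          rw [Finset.mem_powerset] at hM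
          have hmM : m ∉ M := fun h => hmL₀ (hM h)
          have hML : M ≠ insert m L₀ := by
            intro he; exact hmM (he ▸ Finset.mem_insert_self _ _)
          by_cases hM0 : M = ∅
          · simp [hM0]
          · have hMc : 1 ≤ M.card :=
              Finset.card_pos.mpr (Finset.nonempty_iff_ne_empty.mpr hM0)
            have hMle : M.card ≤ n - 1 := hcard₀ ▸ Finset.card_le_card hM
            have hsubins : M ⊆ insert m L₀ := hM.trans (Finset.subset_insert _ _)
            have hcardsd : (insert m L₀ \ M).card = n - M.card := by
              rw [Finset.card_sdiff_of_subset hsubins, hcardins]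
            have hFpM : Fp M = MvPolynomial.C (ff M.card) * Sd ^ (M.card - 1) :=
              ih M.card (by omega) (by omega) M rfl
            have hFpN : Fp (insert m L₀ \ M)
                = MvPolynomial.C (ff (n - M.card)) * Sd ^ (n - M.card - 1) :=
              ih (n - M.card) (by omega) (by omega) _ hcardsd
            rw [if_neg (by push_neg; exact ⟨Finset.nonempty_iff_ne_empty.mpr hM0, hML⟩), if_neg hmM,
              if_neg (by omega : ¬ M.card = 0), hFpM, hFpN]
            rw [show (n : ℕ) - 2 = (M.card - 1) + (n - M.card - 1) by omega, pow_add,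
              map_mul]
            ring
        rw [Finset.sum_congr rfl hcongr,
          sum_powerset_fun_card L₀ (fun j => if j = 0 then 0 else
            MvPolynomial.X 1 * Sd ^ (n-2) * MvPolynomial.C (ff j * ff (n - j))),
          hcard₀, show n - 1 + 1 = n by omega]
        rw [← Finset.sum_subset
          (show Finset.Icc 1 (n-1) ⊆ Finset.range n from by
            intro j hj; simp only [Finset.mem_Icc, Finset.mem_range] at *; omega)
          (by
            intro j hj hj2
            simp only [Finset.mem_Icc, Finset.mem_range] at hj hj2
            have : j = 0 := by omega
            simp [this])]
        have hstep : ∀ j ∈ Finset.Icc 1 (n-1),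
            (n-1).choose j • (if j = 0 then 0 else
              MvPolynomial.X 1 * Sd ^ (n-2) * MvPolynomial.C (ff j * ff (n - j)))
            = MvPolynomial.X 1 * Sd ^ (n-2)
                * MvPolynomial.C ((((n-1).choose j : ℕ) : ℚ) * ff j * ff (n - j)) := by
          intro j hj
          simp only [Finset.mem_Icc] at hj
          rw [if_neg (by omega : ¬ j = 0), smul_C_mul]
          rw [mul_assoc ((((n-1).choose j : ℕ) : ℚ)) (ff j) (ff (n-j))]
        rw [Finset.sum_congr rfl hstep, ← Finset.mul_sum, ← map_sum,
          ff_symm (by omega : 2 ≤ n)]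
      -- second sum
      have hsum2 : ∑ M ∈ L₀.powerset,
          (if insert m M = ∅ ∨ insert m M = insert m L₀ then 0 else
            (if m ∈ insert m M then (MvPolynomial.X 0 : MvPolynomial (Fin 3) ℚ)
              else MvPolynomial.X 1)
              * Fp (insert m M) * Fp (insert m L₀ \ insert m M))
          = MvPolynomial.X 0 * Sd ^ (n-2) * MvPolynomial.C (ff n) := by
        have hcongr : ∀ M ∈ L₀.powerset,
            (if insert m M = ∅ ∨ insert m M = insert m L₀ then 0 else
              (if m ∈ insert m M then (MvPolynomial.X 0 : MvPolynomial (Fin 3) ℚ)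
                else MvPolynomial.X 1)
                * Fp (insert m M) * Fp (insert m L₀ \ insert m M))
            = (if M.card = n - 1 then 0 else
                MvPolynomial.X 0 * Sd ^ (n-2)
                  * MvPolynomial.C (ff (M.card+1) * ff (n - 1 - M.card))) := by
          intro M hM
          rw [Finset.mem_powerset] at hM
          have hmM : m ∉ M := fun h => hmL₀ (hM h)
          have hcardiM : (insert m M).card = M.card + 1 := Finset.card_insert_of_notMem hmM
          have hne : insert m M ≠ ∅ := Finset.insert_ne_empty _ _
          have hiff : insert m M = insert m L₀ ↔ M = L₀ := by
            constructor
            · intro he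
              apply Finset.Subset.antisymm hM
              intro x hx
              have : x ∈ insert m M := by rw [he]; exact Finset.mem_insert_of_mem hx
              rcases Finset.mem_insert.mp this with h | h
              · exact absurd (h ▸ hx) hmL₀
              · exact h
            · intro he; rw [he]
          have hiff2 : M = L₀ ↔ M.card = n - 1 := by
            constructor
            · intro he; rw [he, hcard₀]
            · intro he
              exact Finset.eq_of_subset_of_card_le hM (by omega)
          by_cases hM0 : M = L₀
          · rw [if_pos (Or.inr (hiff.mpr hM0)), if_pos (hiff2.mp hM0)]
          · have hMle : M.card ≤ n - 2 := by
              have h1 : M.card ≤ n - 1 := hcard₀ ▸ Finset.card_le_card hM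
              have h2 : M.card ≠ n - 1 := fun he => hM0 (hiff2.mpr he)
              omega
            have hsubins : insert m M ⊆ insert m L₀ := Finset.insert_subset_insert _ hM
            have hcardsd : (insert m L₀ \ insert m M).card = n - 1 - M.card := by
              rw [Finset.card_sdiff_of_subset hsubins, hcardins, hcardiM]; omega
            have hFpM : Fp (insert m M)
                = MvPolynomial.C (ff (M.card + 1)) * Sd ^ (M.card + 1 - 1) :=
              ih (M.card + 1) (by omega) (by omega) _ hcardiM
            have hFpN : Fp (insert m L₀ \ insert m M)
                = MvPolynomial.C (ff (n - 1 - M.card)) * Sd ^ (n - 1 - M.card - 1) :=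
              ih (n - 1 - M.card) (by omega) (by omega) _ hcardsd
            rw [if_neg (by push_neg; exact ⟨Finset.nonempty_iff_ne_empty.mpr hne, fun h => hM0 (hiff.mp h)⟩),
              if_pos (Finset.mem_insert_self _ _),
              if_neg (show ¬ M.card = n - 1 from fun he => hM0 (hiff2.mpr he)),
              hFpM, hFpN]
            rw [show (n : ℕ) - 2 = (M.card + 1 - 1) + (n - 1 - M.card - 1) by omega, pow_add,
              map_mul]
            ring
        rw [Finset.sum_congr rfl hcongr,
          sum_powerset_fun_card L₀ (fun j => if j = n - 1 then 0 else
            MvPolynomial.X 0 * Sd ^ (n-2) * MvPolynomial.C (ff (j+1) * ff (n - 1 - j))),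
          hcard₀, show n - 1 + 1 = n by omega]
        rw [← Finset.sum_subset
          (show Finset.range (n-1) ⊆ Finset.range n from by
            intro j hj; simp only [Finset.mem_range] at *; omega)
          (by
            intro j hj hj2
            simp only [Finset.mem_range] at hj hj2
            have : j = n - 1 := by omega
            simp [this])]
        have hstep : ∀ j ∈ Finset.range (n-1),
            (n-1).choose j • (if j = n - 1 then 0 else
              MvPolynomial.X 0 * Sd ^ (n-2)
                * MvPolynomial.C (ff (j+1) * ff (n - 1 - j)))
            = MvPolynomial.X 0 * Sd ^ (n-2)
                * MvPolynomial.C ((((n-1).choose j : ℕ) : ℚ) * ff (j+1) * ff (n - 1 - j)) := by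
          intro j hj
          simp only [Finset.mem_range] at hj
          rw [if_neg (by omega : ¬ j = n - 1), smul_C_mul]
          rw [mul_assoc ((((n-1).choose j : ℕ) : ℚ)) (ff (j+1)) (ff (n-1-j))]
        rw [Finset.sum_congr rfl hstep]
        have hreindex : ∑ j ∈ Finset.range (n-1),
            MvPolynomial.X 0 * Sd ^ (n-2)
              * MvPolynomial.C ((((n-1).choose j : ℕ) : ℚ) * ff (j+1) * ff (n - 1 - j))
            = ∑ i ∈ Finset.Icc 1 (n-1),
            MvPolynomial.X 0 * Sd ^ (n-2)
              * MvPolynomial.C ((((n-1).choose (i-1) : ℕ) : ℚ) * ff i * ff (n - i)) := by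
          apply Finset.sum_nbij' (fun j => j + 1) (fun i => i - 1)
          · intro a ha; simp only [Finset.mem_Icc, Finset.mem_range] at *; omega
          · intro a ha; simp only [Finset.mem_Icc, Finset.mem_range] at *; omega
          · intro a _; omega
          · intro a ha; simp only [Finset.mem_Icc] at ha; omega
          · intro a ha
            simp only [Finset.mem_range] at ha
            rw [show a + 1 - 1 = a by omega, show n - (a+1) = n - 1 - a by omega]
        rw [hreindex, ← Finset.mul_sum, ← map_sum, ff_def (by omega : 2 ≤ n)]
      rw [hsum1, hsum2]
      rw [show (n : ℕ) - 1 = (n - 2) + 1 by omega, pow_succ, Sd]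
      ring
/- the abstract recursion for the root-minimal generating polynomials -/
noncomputable def Otil : ℕ → MvPolynomial (Fin 3) ℚ
  | 0 => 1
  | (n+1) => ∑ j ∈ (Finset.Icc 1 (n+1)).attach,
      (((n+1).choose j.1 : ℕ) : MvPolynomial (Fin 3) ℚ)
        * (MvPolynomial.X 2 * MvPolynomial.C (ff j.1) * Sd ^ (j.1 - 1) * Otil (n+1-j.1))
  termination_by n => n
  decreasing_by
  · have := j.2; simp only [Finset.mem_Icc] at this; omega

lemma Otil_zero : Otil 0 = 1 := by rw [Otil]

lemma Otil_succ (n : ℕ) : Otil (n+1) = ∑ j ∈ Finset.Icc 1 (n+1),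
    ((((n+1).choose j : ℕ) : MvPolynomial (Fin 3) ℚ)
      * (MvPolynomial.X 2 * MvPolynomial.C (ff j) * Sd ^ (j - 1) * Otil (n+1-j))) := by
  rw [Otil]
  exact Finset.sum_attach (Finset.Icc 1 (n+1))
    (fun j => (((n+1).choose j : ℕ) : MvPolynomial (Fin 3) ℚ)
      * (MvPolynomial.X 2 * MvPolynomial.C (ff j) * Sd ^ (j - 1) * Otil (n+1-j)))

lemma Osp_eq : ∀ n : ℕ, ∀ L : Finset ℕ, L.card = n + 1 → Osp L = Otil n := by
  intro n
  induction n using Nat.strong_induction_on with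
  | _ n ih =>
    intro L hcard
    rcases Nat.eq_zero_or_pos n with h1 | h2
    · subst h1
      obtain ⟨a, rfl⟩ := Finset.card_eq_one.mp hcard
      rw [Osp_singleton, Otil_zero]
    · obtain ⟨k, rfl⟩ : ∃ k, n = k + 1 := ⟨n - 1, by omega⟩
      have h2' : 2 ≤ L.card := by omega
      have hLne : L.Nonempty := Finset.card_pos.mp (by omega)
      set m := L.min' hLne with hmdef
      have hm : m ∈ L := Finset.min'_mem _ _
      have hmin : ∀ b ∈ L, m ≤ b := fun b hb => Finset.min'_le _ _ hb
      rw [Osp_rec L hm hmin h2']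
      have hcard₀ : (L.erase m).card = k + 1 := by
        rw [Finset.card_erase_of_mem hm, hcard]
        omega
      have hcongr : ∀ M ∈ (L.erase m).powerset,
          (if M = ∅ then 0 else
            (MvPolynomial.X 2 : MvPolynomial (Fin 3) ℚ) * Fp M * Osp (L \ M))
          = (if M.card = 0 then 0 else
              MvPolynomial.X 2 * MvPolynomial.C (ff M.card) * Sd ^ (M.card - 1)
                * Otil (k + 1 - M.card)) := by
        intro M hM
        rw [Finset.mem_powerset] at hM
        by_cases hM0 : M = ∅
        · simp [hM0]
        · have hMc : 1 ≤ M.card :=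
            Finset.card_pos.mpr (Finset.nonempty_iff_ne_empty.mpr hM0)
          have hMle : M.card ≤ k + 1 := hcard₀ ▸ Finset.card_le_card hM
          have hsubL : M ⊆ L := hM.trans (Finset.erase_subset _ _)
          have hcardsd : (L \ M).card = (k + 1 - M.card) + 1 := by
            rw [Finset.card_sdiff_of_subset hsubL, hcard]; omega
          have hFpM : Fp M = MvPolynomial.C (ff M.card) * Sd ^ (M.card - 1) :=
            Fp_eq M.card (by omega) M rfl
          have hOsp : Osp (L \ M) = Otil (k + 1 - M.card) :=
            ih (k + 1 - M.card) (by omega) _ hcardsd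
          rw [if_neg hM0, if_neg (by omega : ¬ M.card = 0), hFpM, hOsp]
          ring
      rw [Finset.sum_congr rfl hcongr,
        sum_powerset_fun_card (L.erase m) (fun j => if j = 0 then 0 else
          MvPolynomial.X 2 * MvPolynomial.C (ff j) * Sd ^ (j - 1) * Otil (k + 1 - j)),
        hcard₀]
      rw [← Finset.sum_subset
        (show Finset.Icc 1 (k+1) ⊆ Finset.range (k+1+1) from by
          intro j hj; simp only [Finset.mem_Icc, Finset.mem_range] at *; omega)
        (by
          intro j hj hj2
          simp only [Finset.mem_Icc, Finset.mem_range] at hj hj2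
          have : j = 0 := by omega
          simp [this])]
      rw [Otil_succ]
      apply Finset.sum_congr rfl
      intro j hj
      simp only [Finset.mem_Icc] at hj
      rw [if_neg (by omega : ¬ j = 0), nsmul_eq_mul]

end LTree

open MvPolynomial

section
open LTree
lemma range'_val (n : ℕ) :
    ((List.range' 1 (n+1) : List ℕ) : Multiset ℕ) = (Finset.Icc 1 (n+1)).val := by
  have hnd : (List.range' 1 (n+1)).Nodup := List.nodup_range'
  apply (Multiset.Nodup.ext (Multiset.coe_nodup.mpr hnd) (Finset.Icc 1 (n+1)).nodup).mpr
  intro a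
  simp only [Multiset.mem_coe, List.mem_range'_1, ← Finset.mem_def, Finset.mem_Icc]
  omega

private lemma Opoly_eq (n : ℕ) : Opoly n = Otil n := by
  have hIcc : (Finset.Icc 1 (n+1)).card = n + 1 := by
    rw [Nat.card_Icc]; omega
  have h1mem : (1 : ℕ) ∈ Finset.Icc 1 (n+1) := by simp only [Finset.mem_Icc]; omega
  have h1min : ∀ b ∈ Finset.Icc 1 (n+1), 1 ≤ b := fun b hb => (Finset.mem_Icc.mp hb).1
  have hset : {T : LTree | IsLPT n T ∧ rootLabel T = 1}
      = ↑(OsF (Finset.Icc 1 (n+1))) := by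
    ext T
    simp only [Set.mem_setOf_eq, Finset.coe_sort_coe, Finset.mem_coe, mem_OsF]
    constructor
    · rintro ⟨hperm, hroot⟩
      have hlab : lab T = (Finset.Icc 1 (n+1)).val := by
        rw [lab, ← range'_val n]
        exact Multiset.coe_eq_coe.mpr hperm
      refine ⟨hlab, ?_⟩
      intro b hb
      rw [hroot]
      exact h1min b ((mem_labels_iff hlab b).mp hb)
    · rintro ⟨hlab, hroot⟩
      constructor
      · rw [IsLPT, ← Multiset.coe_eq_coe, range'_val n]
        exact hlab
      · exact rootLabel_eq_min hlab h1mem h1min hroot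
  rw [Opoly, hset]
  rw [finsum_mem_coe_finset]
  rw [← Osp_eq n (Finset.Icc 1 (n+1)) hIcc, Osp]
  rfl

end
section FinalAlgebra
open LTree

/-- the explicit square root series -/
noncomputable def Rd : PowerSeries (MvPolynomial (Fin 3) ℚ) :=
  PowerSeries.mk fun n => if n = 0 then 1
    else -(MvPolynomial.C (ff n * ((n.factorial : ℚ))⁻¹)) * Sd ^ n

lemma conv_q (n : ℕ) :
    ∑ k ∈ Finset.range (n+1),
      (ff (k+1) * (((k+1).factorial : ℚ))⁻¹) * (ff (n+1-k) * (((n+1-k).factorial : ℚ))⁻¹)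
    = 2 * ff (n+2) * (((n+2).factorial : ℚ))⁻¹ := by
  have hre : ∑ k ∈ Finset.range (n+1),
      (ff (k+1) * (((k+1).factorial : ℚ))⁻¹) * (ff (n+1-k) * (((n+1-k).factorial : ℚ))⁻¹)
      = ∑ j ∈ Finset.Icc 1 (n+1),
        (ff j * ((j.factorial : ℚ))⁻¹) * (ff (n+2-j) * (((n+2-j).factorial : ℚ))⁻¹) := by
    apply Finset.sum_nbij' (fun k => k+1) (fun j => j-1)
    · intro a ha; simp only [Finset.mem_Icc, Finset.mem_range] at *; omega
    · intro a ha; simp only [Finset.mem_Icc, Finset.mem_range] at *; omega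
    · intro a _; omega
    · intro a ha; simp only [Finset.mem_Icc] at ha; omega
    · intro a ha
      simp only [Finset.mem_range] at ha
      rw [show n + 2 - (a+1) = n + 1 - a by omega]
  rw [hre]
  have hterm : ∀ j ∈ Finset.Icc 1 (n+1),
      (ff j * ((j.factorial : ℚ))⁻¹) * (ff (n+2-j) * (((n+2-j).factorial : ℚ))⁻¹)
      = (((n+2).choose j : ℕ) : ℚ) * ff j * ff (n+2-j) * (((n+2).factorial : ℚ))⁻¹ := by
    intro j hj
    simp only [Finset.mem_Icc] at hj
    rw [Nat.cast_choose ℚ (by omega : j ≤ n+2)]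
    have h1 : (j.factorial : ℚ) ≠ 0 := Nat.cast_ne_zero.mpr j.factorial_ne_zero
    have h2 : (((n+2-j).factorial : ℕ) : ℚ) ≠ 0 := Nat.cast_ne_zero.mpr (n+2-j).factorial_ne_zero
    have h3 : (((n+2).factorial : ℕ) : ℚ) ≠ 0 := Nat.cast_ne_zero.mpr (n+2).factorial_ne_zero
    field_simp
  rw [Finset.sum_congr rfl hterm, ← Finset.sum_mul]
  have h2f := ff_two (k := n+2) (by omega)
  rw [show n + 2 - 1 = n + 1 by omega] at h2f
  rw [h2f]

lemma Rd_constantCoeff : PowerSeries.constantCoeff (R := MvPolynomial (Fin 3) ℚ) Rd = 1 := by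
  rw [Rd, ← PowerSeries.coeff_zero_eq_constantCoeff, PowerSeries.coeff_mk]
  simp

lemma Rd_sq : Rd ^ 2 = 1 - 2 * PowerSeries.C (R := MvPolynomial (Fin 3) ℚ)
    (MvPolynomial.X 0 + MvPolynomial.X 1) * PowerSeries.X := by
  have hSd : (MvPolynomial.X 0 + MvPolynomial.X 1 : MvPolynomial (Fin 3) ℚ) = Sd := rfl
  rw [hSd]
  apply PowerSeries.ext
  intro n
  rw [pow_two, PowerSeries.coeff_mul, Finset.Nat.sum_antidiagonal_eq_sum_range_succ_mk]
  have hRHS : (PowerSeries.coeff (R := MvPolynomial (Fin 3) ℚ) n)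
      (1 - 2 * PowerSeries.C (R := MvPolynomial (Fin 3) ℚ) Sd * PowerSeries.X)
      = (if n = 0 then 1 else 0) + (if n = 1 then -(2 * Sd) else 0) := by
    rw [map_sub, PowerSeries.coeff_one]
    rw [show (2 : PowerSeries (MvPolynomial (Fin 3) ℚ)) * PowerSeries.C Sd
        = PowerSeries.C (2 * Sd) from by rw [map_mul, map_ofNat]]
    rw [PowerSeries.coeff_C_mul, PowerSeries.coeff_X]
    split_ifs with h1 h2 <;> (try omega) <;> simp
  rw [hRHS]
  match n with
  | 0 =>
    simp [Rd, PowerSeries.coeff_mk]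
  | 1 =>
    rw [Finset.sum_range_succ, Finset.sum_range_one]
    simp only [Rd, PowerSeries.coeff_mk]
    norm_num [ff_one, Nat.factorial]
    ring
  | (n+2) =>
    rw [Finset.sum_range_succ, Finset.sum_range_succ']
    have hmid : ∀ k ∈ Finset.range (n+1),
        (PowerSeries.coeff (k+1)) Rd * (PowerSeries.coeff (n+2-(k+1))) Rd
        = MvPolynomial.C ((ff (k+1) * (((k+1).factorial : ℚ))⁻¹)
            * (ff (n+1-k) * (((n+1-k).factorial : ℚ))⁻¹)) * Sd ^ (n+2) := by
      intro k hk
      simp only [Finset.mem_range] at hk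
      rw [Rd, PowerSeries.coeff_mk, PowerSeries.coeff_mk,
        if_neg (by omega : ¬ k + 1 = 0),
        if_neg (by omega : ¬ n + 2 - (k+1) = 0),
        show n + 2 - (k+1) = n + 1 - k by omega]
      rw [show (n : ℕ) + 2 = (k+1) + (n+1-k) by omega, pow_add,
        map_mul (MvPolynomial.C : ℚ →+* MvPolynomial (Fin 3) ℚ)
          (ff (k+1) * (((k+1).factorial : ℚ))⁻¹)
          (ff (n+1-k) * (((n+1-k).factorial : ℚ))⁻¹)]
      ring
    rw [Finset.sum_congr rfl hmid, ← Finset.sum_mul, ← map_sum, conv_q n]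
    have hend1 : (PowerSeries.coeff 0) Rd * (PowerSeries.coeff (n+2-0)) Rd
        = -(MvPolynomial.C (ff (n+2) * (((n+2).factorial : ℚ))⁻¹) * Sd ^ (n+2)) := by
      rw [Rd, PowerSeries.coeff_mk, PowerSeries.coeff_mk, if_pos rfl,
        if_neg (by omega : ¬ n + 2 - 0 = 0), show n + 2 - 0 = n + 2 by omega]
      ring
    have hend2 : (PowerSeries.coeff (n+2)) Rd * (PowerSeries.coeff (n+2-(n+2))) Rd
        = -(MvPolynomial.C (ff (n+2) * (((n+2).factorial : ℚ))⁻¹) * Sd ^ (n+2)) := by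
      rw [Rd, PowerSeries.coeff_mk, PowerSeries.coeff_mk,
        if_neg (by omega : ¬ n + 2 = 0),
        if_pos (by omega : n + 2 - (n+2) = 0)]
      ring
    rw [hend1, hend2]
    rw [if_neg (by omega : ¬ n + 2 = 0), if_neg (by omega : ¬ n + 2 = 1)]
    rw [show (2 : ℚ) * ff (n+2) * (((n+2).factorial : ℚ))⁻¹
        = (ff (n+2) * (((n+2).factorial : ℚ))⁻¹) * 2 by ring,
      map_mul (MvPolynomial.C : ℚ →+* MvPolynomial (Fin 3) ℚ)
        (ff (n+2) * (((n+2).factorial : ℚ))⁻¹) 2, map_ofNat]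
    ring

lemma R_unique (R : PowerSeries (MvPolynomial (Fin 3) ℚ))
    (hR0 : PowerSeries.constantCoeff (R := MvPolynomial (Fin 3) ℚ) R = 1)
    (hR2 : R ^ 2 = 1 - 2 * PowerSeries.C (R := MvPolynomial (Fin 3) ℚ)
      (MvPolynomial.X 0 + MvPolynomial.X 1) * PowerSeries.X) : R = Rd := by
  have hsq : R ^ 2 = Rd ^ 2 := by rw [hR2, Rd_sq]
  have hz : (R - Rd) * (R + Rd) = 0 := by
    have hexp : (R - Rd) * (R + Rd) = R ^ 2 - Rd ^ 2 := by ring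
    rw [hexp, hsq, sub_self]
  rcases mul_eq_zero.mp hz with h | h
  · exact sub_eq_zero.mp h
  · exfalso
    have hc := congrArg (PowerSeries.constantCoeff (R := MvPolynomial (Fin 3) ℚ)) h
    rw [map_add, hR0, Rd_constantCoeff, map_zero] at hc
    norm_num at hc


lemma key_conv (n : ℕ) :
    ∑ k ∈ Finset.range (n+1),
      MvPolynomial.C (((k.factorial : ℚ))⁻¹) * Otil k
        * (MvPolynomial.X 2 * (MvPolynomial.C (ff (n+1-k) * (((n+1-k).factorial : ℚ))⁻¹)
            * Sd ^ (n+1-k)))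
    = MvPolynomial.C ((((n+1).factorial : ℚ))⁻¹) * Otil (n+1) * Sd := by
  rw [Otil_succ, Finset.mul_sum, Finset.sum_mul]
  symm
  apply Finset.sum_nbij' (fun j => n+1-j) (fun k => n+1-k)
  · intro a ha; simp only [Finset.mem_Icc, Finset.mem_range] at *; omega
  · intro a ha; simp only [Finset.mem_Icc, Finset.mem_range] at *; omega
  · intro a ha; simp only [Finset.mem_Icc] at ha; omega
  · intro a ha; simp only [Finset.mem_range] at ha; omega
  · intro j hj
    simp only [Finset.mem_Icc] at hj
    obtain ⟨i, rfl⟩ : ∃ i, j = i + 1 := ⟨j - 1, by omega⟩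
    rw [show n + 1 - (n + 1 - (i+1)) = i + 1 by omega]
    rw [show (i : ℕ) + 1 - 1 = i by omega]
    have h1 : (((i+1).factorial : ℕ) : ℚ) ≠ 0 := Nat.cast_ne_zero.mpr (i+1).factorial_ne_zero
    have h2 : (((n+1-(i+1)).factorial : ℕ) : ℚ) ≠ 0 :=
      Nat.cast_ne_zero.mpr (n+1-(i+1)).factorial_ne_zero
    have h3 : (((n+1).factorial : ℕ) : ℚ) ≠ 0 := Nat.cast_ne_zero.mpr (n+1).factorial_ne_zero
    have hsc : MvPolynomial.C ((((n+1).factorial : ℚ))⁻¹)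
          * ((((n+1).choose (i+1) : ℕ)) : MvPolynomial (Fin 3) ℚ)
          * MvPolynomial.C (ff (i+1))
        = MvPolynomial.C (ff (i+1) * (((i+1).factorial : ℚ))⁻¹)
          * MvPolynomial.C ((((n+1-(i+1)).factorial : ℚ))⁻¹) := by
      rw [← map_natCast (MvPolynomial.C : ℚ →+* MvPolynomial (Fin 3) ℚ) ((n+1).choose (i+1)),
        ← map_mul, ← map_mul, ← map_mul]
      congr 1
      rw [Nat.cast_choose ℚ (by omega : i + 1 ≤ n + 1)]
      field_simp
    linear_combination (MvPolynomial.X 2 * Sd ^ i * Otil (n + 1 - (i+1)) * Sd) * hsc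

end FinalAlgebra
/-- In `ℚ[x,y,t][[q]]`, the generating function `G = Σ_{n≥0} Oₙ(x,y,t) qⁿ/n!`
satisfies `G · (x + y - t + t·R) = x + y`, where `R` is the unique power series
with constant term `1` such that `R² = 1 - 2(x+y)q`; that is,
`Σ_{n≥0} Oₙ(x,y,t) qⁿ/n! = (x+y)/(x + y - t + t√(1 - 2(x+y)q))`. -/
theorem egf_Opoly (R : PowerSeries (MvPolynomial (Fin 3) ℚ))
    (hR0 : PowerSeries.constantCoeff (R := MvPolynomial (Fin 3) ℚ) R = 1)
    (hR2 : R ^ 2 = 1 - 2 * PowerSeries.C (R := MvPolynomial (Fin 3) ℚ) (X 0 + X 1) * PowerSeries.X) :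
    (PowerSeries.mk fun n => MvPolynomial.C ((n.factorial : ℚ)⁻¹) * Opoly n)
      * (PowerSeries.C (R := MvPolynomial (Fin 3) ℚ) (X 0 + X 1)
          - PowerSeries.C (R := MvPolynomial (Fin 3) ℚ) (X 2)
          + PowerSeries.C (R := MvPolynomial (Fin 3) ℚ) (X 2) * R)
      = PowerSeries.C (R := MvPolynomial (Fin 3) ℚ) (X 0 + X 1) := by
  classical
  have hRd : R = Rd := R_unique R hR0 hR2
  subst hRd
  apply PowerSeries.ext
  intro n
  rw [PowerSeries.coeff_mul, Finset.Nat.sum_antidiagonal_eq_sum_range_succ_mk]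
  have hG : ∀ k : ℕ, (PowerSeries.coeff (R := MvPolynomial (Fin 3) ℚ) k)
      (PowerSeries.mk fun n => MvPolynomial.C ((n.factorial : ℚ)⁻¹) * Opoly n)
      = MvPolynomial.C ((k.factorial : ℚ)⁻¹) * LTree.Otil k := by
    intro k; rw [PowerSeries.coeff_mk, Opoly_eq]
  have hD : ∀ j : ℕ, (PowerSeries.coeff (R := MvPolynomial (Fin 3) ℚ) j)
      (PowerSeries.C (R := MvPolynomial (Fin 3) ℚ) (X 0 + X 1)
        - PowerSeries.C (R := MvPolynomial (Fin 3) ℚ) (X 2)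
        + PowerSeries.C (R := MvPolynomial (Fin 3) ℚ) (X 2) * Rd)
      = if j = 0 then (X 0 + X 1) else
          X 2 * (-(MvPolynomial.C (LTree.ff j * ((j.factorial : ℚ))⁻¹)) * LTree.Sd ^ j) := by
    intro j
    rw [map_add, map_sub, PowerSeries.coeff_C, PowerSeries.coeff_C, PowerSeries.coeff_C_mul,
      Rd, PowerSeries.coeff_mk]
    by_cases hj : j = 0
    · subst hj; simp
    · simp only [if_neg hj]; ring
  simp_rw [hG, hD]
  match n with
  | 0 =>
    rw [Finset.sum_range_one, PowerSeries.coeff_C]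
    norm_num [LTree.Otil_zero, Nat.factorial]
  | (n+1) =>
    rw [Finset.sum_range_succ, PowerSeries.coeff_C, if_neg (by omega : ¬ n + 1 = 0)]
    have hmid : ∀ k ∈ Finset.range (n+1),
        MvPolynomial.C ((k.factorial : ℚ)⁻¹) * LTree.Otil k
          * (if n + 1 - k = 0 then (X 0 + X 1 : MvPolynomial (Fin 3) ℚ) else
              X 2 * (-(MvPolynomial.C (LTree.ff (n+1-k) * (((n+1-k).factorial : ℚ))⁻¹))
                * LTree.Sd ^ (n+1-k)))
        = -(MvPolynomial.C (((k.factorial : ℚ))⁻¹) * LTree.Otil k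
            * (MvPolynomial.X 2
              * (MvPolynomial.C (LTree.ff (n+1-k) * (((n+1-k).factorial : ℚ))⁻¹)
                * LTree.Sd ^ (n+1-k)))) := by
      intro k hk
      simp only [Finset.mem_range] at hk
      rw [if_neg (by omega : ¬ n + 1 - k = 0)]
      ring
    rw [Finset.sum_congr rfl hmid, Finset.sum_neg_distrib, key_conv]
    rw [Nat.sub_self, if_pos rfl]
    have hSd : (X 0 + X 1 : MvPolynomial (Fin 3) ℚ) = LTree.Sd := rfl
    rw [hSd]
    ring
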